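/- Let p be an odd prime, n = 2^k · m with k ≥ 1 and m odd, s = 2^k, and let ℓ be an odd prime dividing p^n + 1. Then the Legendre symbol (p^m / ℓ) = 1 if and only if ℓ ≡ 1 (mod 4s). -/

import Mathlib

theorem legendre_eq_one_iff_mod_four_s
    (p ℓ n k m : ℕ) [Fact ℓ.Prime] (hp : p.Prime) (hpodd : Odd p) (hlodd : Odd ℓ)
    (hk : 1 ≤ k) (hm : Odd m) (hn : n = 2 ^ k * m)
    (hdvd : ℓ ∣ p ^ n + 1) :
    legendreSym ℓ ((p : ℤ) ^ m) = 1 ↔ ℓ % (4 * 2 ^ k) = 1 := by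
  have hl : ℓ.Prime := Fact.out
  have hl3 : 3 ≤ ℓ := hl.two_le.lt_of_ne (fun h => absurd (h ▸ hlodd) (by decide))
  haveI : Fact (2 < ℓ) := ⟨hl3⟩
  -- p^n ≡ -1 mod ℓ
  have hmod : ((p : ZMod ℓ)) ^ n = -1 := by
    have h0 : ((p ^ n + 1 : ℕ) : ZMod ℓ) = 0 :=
      (ZMod.natCast_eq_zero_iff _ _).mpr hdvd
    push_cast at h0
    linear_combination h0
  set t : ZMod ℓ := (p : ZMod ℓ) ^ m with ht
  have hts : t ^ 2 ^ k = -1 := by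
    rw [ht, ← pow_mul, mul_comm, ← hn, hmod]
  have htne : t ≠ 0 := by
    intro h
    rw [h] at hts
    simp at hts
  -- order of t is 2^(k+1)
  have horder : orderOf t = 2 ^ (k + 1) := by
    apply orderOf_eq_prime_pow
    · rw [hts]; exact ZMod.neg_one_ne_one
    · rw [pow_succ, pow_mul, hts]; ring
  have hcast : (((p : ℤ) ^ m : ℤ) : ZMod ℓ) = t := by push_cast [ht]; ring
  rw [legendreSym.eq_one_iff ℓ (by rw [hcast]; exact htne), hcast,
    ZMod.euler_criterion ℓ htne, ← orderOf_dvd_iff_pow_eq_one, horder]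
  -- now: 2^(k+1) ∣ ℓ / 2 ↔ ℓ % (4 * 2^k) = 1
  have hl2 : ℓ / 2 = (ℓ - 1) / 2 := by
    obtain ⟨j, hj⟩ := hlodd
    omega
  have h2dvd : 2 ∣ ℓ - 1 := by
    obtain ⟨j, hj⟩ := hlodd; omega
  rw [hl2, Nat.dvd_div_iff_mul_dvd h2dvd]
  have h42 : 4 * 2 ^ k = 2 * 2 ^ (k + 1) := by ring
  rw [h42]
  set d := 2 * 2 ^ (k + 1) with hd
  have h0 : 0 < 2 ^ (k + 1) := Nat.pow_pos (by norm_num)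
  have hd1 : 1 < d := by omega
  have h1d : 1 % d = 1 := Nat.mod_eq_of_lt hd1
  rw [← Nat.modEq_iff_dvd' (by omega : 1 ≤ ℓ)]
  unfold Nat.ModEq
  rw [h1d]
  exact eq_comm
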